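/- (F13, complex) Any n×n complex invertible matrix G can be factored as G = U Σ O where U ∈ U(n) is unitary, Σ is a positive real diagonal matrix, and O is a complex orthogonal matrix satisfying Oᵀ O = I_n (transpose without conjugation). -/

import Mathlib

open Matrix

theorem simul_diag {n : ℕ} (X Y : Matrix (Fin n) (Fin n) ℝ)
    (hX : Xᵀ = X) (hY : Yᵀ = Y) (hXY : X * Y = Y * X) :
    ∃ (Q : Matrix (Fin n) (Fin n) ℝ) (x y : Fin n → ℝ),
      Qᵀ * Q = 1 ∧ X = Q * diagonal x * Qᵀ ∧ Y = Q * diagonal y * Qᵀ := by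
  classical
  have hXh : X.IsHermitian := hX
  have hYh : Y.IsHermitian := hY
  have hTX : (Matrix.toEuclideanLin X).IsSymmetric :=
    (Matrix.isHermitian_iff_isSymmetric).mp hXh
  have hTY : (Matrix.toEuclideanLin Y).IsSymmetric :=
    (Matrix.isHermitian_iff_isSymmetric).mp hYh
  have hC : Commute (Matrix.toEuclideanLin X) (Matrix.toEuclideanLin Y) := by
    have h1 : Matrix.toEuclideanLin (X * Y) = Matrix.toEuclideanLin (Y * X) := by rw [hXY]
    have h2 : ∀ (M N : Matrix (Fin n) (Fin n) ℝ),
        Matrix.toEuclideanLin (M * N) =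
          (Matrix.toEuclideanLin M) ∘ₗ (Matrix.toEuclideanLin N) := by
      intro M N
      ext v
      simp [Matrix.toEuclideanLin_apply, Matrix.mulVec_mulVec]
    rw [h2, h2] at h1
    exact h1
  set V : ℝ × ℝ → Submodule ℝ (EuclideanSpace ℝ (Fin n)) := fun i =>
    Module.End.eigenspace (Matrix.toEuclideanLin X) i.2 ⊓
      Module.End.eigenspace (Matrix.toEuclideanLin Y) i.1 with hVdef
  have hInt : DirectSum.IsInternal V :=
    LinearMap.IsSymmetric.directSum_isInternal_of_commute hTX hTY hC
  have hFam : OrthogonalFamily ℝ (fun i => V i) fun i => (V i).subtypeₗᵢ :=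
    LinearMap.IsSymmetric.orthogonalFamily_eigenspace_inf_eigenspace hTX hTY
  have hIndep : iSupIndep V :=
    (DirectSum.isInternal_submodule_iff_iSupIndep_and_iSup_eq_top _).mp hInt |>.1
  haveI : Fintype {i : ℝ × ℝ // V i ≠ ⊥} := hIndep.fintypeNeBotOfFiniteDimensional
  have hInt' : DirectSum.IsInternal (fun i : {i // V i ≠ ⊥} => V i) :=
    DirectSum.isInternal_ne_bot_iff.mpr hInt
  have hFam' : OrthogonalFamily ℝ (fun i : {i // V i ≠ ⊥} => V i)
      (fun i => (V i).subtypeₗᵢ) := hFam.comp Subtype.val_injective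
  have hn : Module.finrank ℝ (EuclideanSpace ℝ (Fin n)) = n := by
    simp
  set b := hInt'.subordinateOrthonormalBasis hn hFam' with hb
  set χ := fun a => (hInt'.subordinateOrthonormalBasisIndex hn a hFam' : {i // V i ≠ ⊥}) with hχ
  have hmem : ∀ a, b a ∈ V (χ a) :=
    fun a => hInt'.subordinateOrthonormalBasis_subordinate hn a hFam'
  -- eigen equations
  have heigX : ∀ a, X *ᵥ (b a : EuclideanSpace ℝ (Fin n)) = ((χ a : ℝ × ℝ).2) • (b a : _) := by
    intro a
    have := (hmem a).1
    rw [SetLike.mem_coe, Module.End.mem_eigenspace_iff] at this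
    have := congrArg (WithLp.equiv 2 (Fin n → ℝ)) this
    simpa [Matrix.toEuclideanLin_apply] using this
  have heigY : ∀ a, Y *ᵥ (b a : EuclideanSpace ℝ (Fin n)) = ((χ a : ℝ × ℝ).1) • (b a : _) := by
    intro a
    have := (hmem a).2
    rw [SetLike.mem_coe, Module.End.mem_eigenspace_iff] at this
    have := congrArg (WithLp.equiv 2 (Fin n → ℝ)) this
    simpa [Matrix.toEuclideanLin_apply] using this
  refine ⟨Matrix.of fun i a => b a i, fun a => (χ a : ℝ × ℝ).2, fun a => (χ a : ℝ × ℝ).1,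
    ?_, ?_, ?_⟩
  · ext a c
    have := orthonormal_iff_ite.mp b.orthonormal a c
    simp only [PiLp.inner_apply, RCLike.inner_apply, conj_trivial] at this
    simp only [Matrix.mul_apply, Matrix.transpose_apply, Matrix.of_apply]
    rw [Finset.sum_congr rfl (fun j _ => mul_comm ((b a) j) ((b c) j)), this]
    simp [Matrix.one_apply, eq_comm]
  · have hQQ : (Matrix.of fun i a => b a i)ᵀ * (Matrix.of fun i a => b a i) = 1 := by
      ext a c
      have := orthonormal_iff_ite.mp b.orthonormal a c
      simp only [PiLp.inner_apply, RCLike.inner_apply, conj_trivial] at this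
      simp only [Matrix.mul_apply, Matrix.transpose_apply, Matrix.of_apply]
      rw [Finset.sum_congr rfl (fun j _ => mul_comm ((b a) j) ((b c) j)), this]
      simp [Matrix.one_apply, eq_comm]
    have hQQT : (Matrix.of fun i a => b a i) * (Matrix.of fun i a => b a i)ᵀ = 1 :=
      mul_eq_one_comm.mp hQQ
    have hXQ : X * (Matrix.of fun i a => b a i) =
        (Matrix.of fun i a => b a i) * diagonal (fun a => (χ a : ℝ × ℝ).2) := by
      ext i a
      have h := congrFun (heigX a) i
      simp only [Matrix.mulVec, dotProduct, Pi.smul_apply, smul_eq_mul] at h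
      rw [Matrix.mul_apply, Matrix.mul_diagonal]
      simp only [Matrix.of_apply, PiLp.smul_apply, Pi.smul_apply, smul_eq_mul] at h ⊢
      rw [h]
      ring
    calc X = X * ((Matrix.of fun i a => b a i) * (Matrix.of fun i a => b a i)ᵀ) := by
            rw [hQQT, mul_one]
      _ = (X * (Matrix.of fun i a => b a i)) * (Matrix.of fun i a => b a i)ᵀ := by
            rw [mul_assoc]
      _ = _ := by rw [hXQ, mul_assoc]
  · have hQQ : (Matrix.of fun i a => b a i)ᵀ * (Matrix.of fun i a => b a i) = 1 := by
      ext a c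
      have := orthonormal_iff_ite.mp b.orthonormal a c
      simp only [PiLp.inner_apply, RCLike.inner_apply, conj_trivial] at this
      simp only [Matrix.mul_apply, Matrix.transpose_apply, Matrix.of_apply]
      rw [Finset.sum_congr rfl (fun j _ => mul_comm ((b a) j) ((b c) j)), this]
      simp [Matrix.one_apply, eq_comm]
    have hQQT : (Matrix.of fun i a => b a i) * (Matrix.of fun i a => b a i)ᵀ = 1 :=
      mul_eq_one_comm.mp hQQ
    have hYQ : Y * (Matrix.of fun i a => b a i) =
        (Matrix.of fun i a => b a i) * diagonal (fun a => (χ a : ℝ × ℝ).1) := by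
      ext i a
      have h := congrFun (heigY a) i
      simp only [Matrix.mulVec, dotProduct, Pi.smul_apply, smul_eq_mul] at h
      rw [Matrix.mul_apply, Matrix.mul_diagonal]
      simp only [Matrix.of_apply, PiLp.smul_apply, Pi.smul_apply, smul_eq_mul] at h ⊢
      rw [h]
      ring
    calc Y = Y * ((Matrix.of fun i a => b a i) * (Matrix.of fun i a => b a i)ᵀ) := by
            rw [hQQT, mul_one]
      _ = (Y * (Matrix.of fun i a => b a i)) * (Matrix.of fun i a => b a i)ᵀ := by
            rw [mul_assoc]
      _ = _ := by rw [hYQ, mul_assoc]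

/-- F13 (complex): any invertible complex matrix `G` factors as `G = U Σ O` with
`U` unitary, `Σ` positive real diagonal, `O` complex orthogonal (`Oᵀ O = 1`). -/
theorem unitary_diag_complexOrthogonal_factorization (n : ℕ)
    (G : Matrix (Fin n) (Fin n) ℂ) (hG : IsUnit G.det) :
    ∃ (U O : Matrix (Fin n) (Fin n) ℂ) (σ : Fin n → ℝ),
      Uᴴ * U = 1 ∧ Oᵀ * O = 1 ∧ (∀ i, 0 < σ i) ∧
      G = U * Matrix.diagonal (fun i => (σ i : ℂ)) * O := by
  classical
  have cancel : ∀ {P R : Matrix (Fin n) (Fin n) ℂ}, P * R = 1 →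
      ∀ C D : Matrix (Fin n) (Fin n) ℂ, C * P * (R * D) = C * D := by
    intro P R h C D
    rw [mul_assoc, ← mul_assoc P, h, one_mul]
  have hTC : ∀ (M : Matrix (Fin n) (Fin n) ℂ), Mᵀᴴ = Mᴴᵀ := by
    intro M; ext i j; simp
  set A : Matrix (Fin n) (Fin n) ℂ := G * Gᵀ with hAdef
  have hAT : Aᵀ = A := by
    rw [hAdef, Matrix.transpose_mul, Matrix.transpose_transpose]
  have hAunit : IsUnit A.det := by
    rw [hAdef, Matrix.det_mul, Matrix.det_transpose]
    exact hG.mul hG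
  have hH : (Aᴴ * A).IsHermitian := Matrix.isHermitian_conjTranspose_mul_self A
  set V : Matrix (Fin n) (Fin n) ℂ := (hH.eigenvectorUnitary : Matrix (Fin n) (Fin n) ℂ)
    with hVdef
  have hVmem : V ∈ Matrix.unitaryGroup (Fin n) ℂ := (hH.eigenvectorUnitary).2
  have hVVh : V * Vᴴ = 1 := by
    have := (Matrix.mem_unitaryGroup_iff).mp hVmem
    simpa [Matrix.star_eq_conjTranspose] using this
  have hVhV : Vᴴ * V = 1 := by
    have := (Matrix.mem_unitaryGroup_iff').mp hVmem
    simpa [Matrix.star_eq_conjTranspose] using this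
  set lam : Fin n → ℝ := hH.eigenvalues with hlam
  have hspec : Aᴴ * A = V * diagonal (RCLike.ofReal ∘ lam) * Vᴴ := by
    have := hH.spectral_theorem
    simpa [Matrix.star_eq_conjTranspose] using this
  set B : Matrix (Fin n) (Fin n) ℂ := Vᵀ * A * V with hBdef
  have hNV : Vᴴᵀ * Vᵀ = 1 := by
    rw [← Matrix.transpose_mul, hVVh, Matrix.transpose_one]
  have hVN : Vᵀ * Vᴴᵀ = 1 := by
    rw [← Matrix.transpose_mul, hVhV, Matrix.transpose_one]
  have hBT : Bᵀ = B := by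
    rw [hBdef, Matrix.transpose_mul, Matrix.transpose_mul, Matrix.transpose_transpose, hAT]
    simp only [hAdef, mul_assoc]
  have hBH : Bᴴ = Vᴴ * Aᴴ * Vᴴᵀ := by
    rw [hBdef, Matrix.conjTranspose_mul, Matrix.conjTranspose_mul, hTC, mul_assoc]
  have hBHB : Bᴴ * B = diagonal (RCLike.ofReal ∘ lam) := by
    rw [hBH, hBdef]
    calc Vᴴ * Aᴴ * Vᴴᵀ * (Vᵀ * A * V)
        = Vᴴ * Aᴴ * Vᴴᵀ * (Vᵀ * (A * V)) := by rw [mul_assoc Vᵀ]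
      _ = Vᴴ * Aᴴ * (A * V) := cancel hNV _ _
      _ = Vᴴ * (Aᴴ * A) * V := by simp only [hAdef, mul_assoc]
      _ = Vᴴ * (V * diagonal (RCLike.ofReal ∘ lam) * Vᴴ) * V := by rw [hspec]
      _ = (Vᴴ * V) * diagonal (RCLike.ofReal ∘ lam) * (Vᴴ * V) := by
            simp only [mul_assoc]
      _ = diagonal (RCLike.ofReal ∘ lam) := by rw [hVhV, one_mul, mul_one]
  -- real and imaginary parts of B
  set φ : ℝ →+* ℂ := Complex.ofRealHom with hφ
  set X : Matrix (Fin n) (Fin n) ℝ := Matrix.of fun i j => (B i j).re with hXdef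
  set Y : Matrix (Fin n) (Fin n) ℝ := Matrix.of fun i j => (B i j).im with hYdef
  have hBsymm : ∀ i j, B j i = B i j := by
    intro i j
    have := congrFun (congrFun hBT i) j
    simpa using this
  have hXT : Xᵀ = X := by
    ext i j; simp [hXdef, hBsymm i j]
  have hYT : Yᵀ = Y := by
    ext i j; simp [hYdef, hBsymm i j]
  have hmul : ∀ (M N : Matrix (Fin n) (Fin n) ℝ), (M * N).map φ = M.map φ * N.map φ :=
    fun M N => Matrix.map_mul
  have hBde : B = X.map φ + Complex.I • Y.map φ := by
    ext i j
    simp only [Matrix.add_apply, Matrix.smul_apply, Matrix.map_apply, hXdef, hYdef,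
      Matrix.of_apply, smul_eq_mul, hφ, Complex.ofRealHom_eq_coe]
    rw [mul_comm]
    exact (Complex.re_add_im (B i j)).symm
  have hBHde : Bᴴ = X.map φ - Complex.I • Y.map φ := by
    ext i j
    simp only [Matrix.conjTranspose_apply, Matrix.sub_apply, Matrix.smul_apply,
      Matrix.map_apply, hXdef, hYdef, Matrix.of_apply, smul_eq_mul, hφ,
      Complex.ofRealHom_eq_coe]
    rw [hBsymm i j]
    apply Complex.ext <;> simp
  have hexp : (X.map φ - Complex.I • Y.map φ) * (X.map φ + Complex.I • Y.map φ)
      = (X * X + Y * Y).map φ + Complex.I • ((X * Y - Y * X).map φ) := by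
    rw [Matrix.map_add _ (map_add φ), Matrix.map_sub _ (map_sub φ), hmul, hmul, hmul, hmul]
    simp only [sub_mul, mul_add, smul_mul_assoc, mul_smul_comm, smul_smul,
      Complex.I_mul_I, neg_one_smul, smul_sub]
    module
  have heq : (X * X + Y * Y).map φ + Complex.I • ((X * Y - Y * X).map φ)
      = (diagonal lam).map φ := by
    rw [← hexp, ← hBde, ← hBHde, hBHB]
    rw [Matrix.diagonal_map (map_zero φ)]
    rfl
  have hcomm : X * Y = Y * X := by
    have h0 : X * Y - Y * X = 0 := by
      ext i j
      have h1 := congrFun (congrFun heq i) j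
      simp only [Matrix.add_apply, Matrix.smul_apply, Matrix.map_apply, smul_eq_mul, hφ,
        Complex.ofRealHom_eq_coe] at h1
      have h2 := congrArg Complex.im h1
      simpa using h2
    exact sub_eq_zero.mp h0
  obtain ⟨Q, x, y, hQQ, hXQ, hYQ⟩ := simul_diag X Y hXT hYT hcomm
  set β : Fin n → ℂ := fun k => (x k : ℂ) + (y k : ℂ) * Complex.I with hβ
  set Qc : Matrix (Fin n) (Fin n) ℂ := Q.map φ with hQc
  have hQcT : Qcᵀ * Qc = 1 := by
    rw [hQc, ← Matrix.transpose_map, ← hmul, hQQ, Matrix.map_one ⇑φ (map_zero φ) (map_one φ)]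
  have hQcQcT : Qc * Qcᵀ = 1 := mul_eq_one_comm.mp hQcT
  have hdiag : diagonal (fun k => φ (x k)) + Complex.I • diagonal (fun k => φ (y k))
      = diagonal β := by
    ext i j
    by_cases h : i = j
    · subst h
      simp [Matrix.diagonal_apply_eq, hβ, hφ]
      ring
    · simp [Matrix.diagonal_apply_ne _ h, h]
  have hB2 : B = Qc * diagonal β * Qcᵀ := by
    rw [hBde, hXQ, hYQ, hmul, hmul, hmul, hmul, Matrix.transpose_map,
      Matrix.diagonal_map (map_zero φ), Matrix.diagonal_map (map_zero φ), ← hQc,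
      ← hdiag, mul_add, add_mul, mul_smul_comm, smul_mul_assoc]
  -- recover A from B
  have hA2 : A = Vᴴᵀ * B * Vᴴ := by
    rw [hBdef]
    calc A = (Vᴴᵀ * Vᵀ) * A * (V * Vᴴ) := by rw [hNV, hVVh, one_mul, mul_one]
      _ = Vᴴᵀ * (Vᵀ * A * V) * Vᴴ := by simp only [mul_assoc]
  set U0 : Matrix (Fin n) (Fin n) ℂ := Vᴴᵀ * Qc with hU0def
  have hQcH : Qcᴴ = Qcᵀ := by
    ext i j
    simp [hQc, Matrix.conjTranspose_apply, Matrix.map_apply, hφ, Complex.conj_ofReal]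
  have hU0H : U0ᴴ = Qcᵀ * Vᵀ := by
    rw [hU0def, Matrix.conjTranspose_mul, hQcH]
    congr 1
    rw [hTC Vᴴ, Matrix.conjTranspose_conjTranspose]
  have hU0U : U0ᴴ * U0 = 1 := by
    rw [hU0H, hU0def]
    calc Qcᵀ * Vᵀ * (Vᴴᵀ * Qc) = Qcᵀ * (Vᵀ * Vᴴᵀ) * Qc := by simp only [mul_assoc]
      _ = Qcᵀ * Qc := by rw [hVN, mul_one]
      _ = 1 := hQcT
  have hA3 : A = U0 * diagonal β * U0ᵀ := by
    rw [hA2, hB2, hU0def]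
    rw [Matrix.transpose_mul, Matrix.transpose_transpose]
    simp only [mul_assoc]
  -- β is nonvanishing
  have hβ0 : ∀ k, β k ≠ 0 := by
    have hdet : IsUnit (diagonal β).det := by
      have h1 : IsUnit (U0.det * ((diagonal β).det * U0ᵀ.det)) := by
        have := hAunit
        rw [hA3, Matrix.det_mul, Matrix.det_mul, mul_assoc] at this
        exact this
      have h2 := isUnit_of_mul_isUnit_right h1
      exact isUnit_of_mul_isUnit_left h2
    rw [Matrix.det_diagonal, isUnit_iff_ne_zero] at hdet
    intro k
    exact Finset.prod_ne_zero_iff.mp hdet k (Finset.mem_univ k)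
  -- square roots of phases
  set μ : Fin n → ℂ := fun k => Complex.exp ((((β k).arg / 2 : ℝ) : ℂ) * Complex.I) with hμ
  have hμμ : ∀ k, μ k * μ k = Complex.exp (((β k).arg : ℂ) * Complex.I) := by
    intro k
    rw [hμ, ← Complex.exp_add]
    congr 1
    push_cast
    ring
  have hμstar : ∀ k, star (μ k) * μ k = 1 := by
    intro k
    simp only [hμ, Complex.star_def]
    rw [← Complex.exp_conj, ← Complex.exp_add]
    have : (starRingEnd ℂ) ((((β k).arg / 2 : ℝ) : ℂ) * Complex.I) =
        -((((β k).arg / 2 : ℝ) : ℂ) * Complex.I) := by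
      rw [_root_.map_mul, Complex.conj_ofReal, Complex.conj_I]
      ring
    rw [this, neg_add_cancel, Complex.exp_zero]
  have hβfac : ∀ k, β k = (‖β k‖ : ℂ) * (μ k * μ k) := by
    intro k
    rw [hμμ k, Complex.norm_mul_exp_arg_mul_I]
  set σ0 : Fin n → ℝ := fun k => ‖β k‖ with hσ0
  set σ : Fin n → ℝ := fun k => Real.sqrt (σ0 k) with hσ
  have hσpos : ∀ k, 0 < σ k := by
    intro k
    exact Real.sqrt_pos.mpr (norm_pos_iff.mpr (hβ0 k))
  have hσsq : ∀ k, σ k * σ k = σ0 k := by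
    intro k
    exact Real.mul_self_sqrt (norm_nonneg _)
  set U : Matrix (Fin n) (Fin n) ℂ := U0 * diagonal μ with hUdef
  have hA4 : A = U * diagonal (fun k => (σ0 k : ℂ)) * Uᵀ := by
    have hd : diagonal β = diagonal μ * diagonal (fun k => (σ0 k : ℂ)) * diagonal μ := by
      rw [Matrix.diagonal_mul_diagonal, Matrix.diagonal_mul_diagonal]
      have hfun : β = fun i => μ i * ((σ0 i : ℝ) : ℂ) * μ i := by
        funext k
        rw [hβfac k]
        simp only [hσ0]
        ring
      rw [hfun]
    rw [hUdef, Matrix.transpose_mul, Matrix.diagonal_transpose, hA3, hd]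
    simp only [mul_assoc]
  have hUU : Uᴴ * U = 1 := by
    rw [hUdef, Matrix.conjTranspose_mul, Matrix.diagonal_conjTranspose]
    calc (diagonal (star ∘ μ)) * U0ᴴ * (U0 * diagonal μ)
        = diagonal (star ∘ μ) * (U0ᴴ * U0) * diagonal μ := by simp only [mul_assoc]
      _ = diagonal (star ∘ μ) * diagonal μ := by rw [hU0U, mul_one]
      _ = 1 := by
          rw [Matrix.diagonal_mul_diagonal]
          have : (fun k => (star ∘ μ) k * μ k) = fun _ => (1 : ℂ) := by
            ext k; exact hμstar k
          rw [this, Matrix.diagonal_one]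
  have hUUc : U * Uᴴ = 1 := mul_eq_one_comm.mp hUU
  have hUtc : Uᴴᵀ * Uᵀ = 1 := by rw [← Matrix.transpose_mul, hUUc, Matrix.transpose_one]
  set s : Matrix (Fin n) (Fin n) ℂ := diagonal (fun k => ((σ k : ℂ))⁻¹) with hsdef
  have hsT : sᵀ = s := Matrix.diagonal_transpose _
  have hσ0ne : ∀ k, (σ0 k : ℂ) ≠ 0 := by
    intro k
    rw [Complex.ofReal_ne_zero, hσ0]
    exact (norm_pos_iff.mpr (hβ0 k)).ne'
  have hσne : ∀ k, (σ k : ℂ) ≠ 0 := by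
    intro k
    rw [Complex.ofReal_ne_zero]
    exact (hσpos k).ne'
  have hss : s * s = diagonal (fun k => ((σ0 k : ℂ))⁻¹) := by
    rw [hsdef, Matrix.diagonal_mul_diagonal]
    have : (fun k => ((σ k : ℂ))⁻¹ * ((σ k : ℂ))⁻¹) = fun k => ((σ0 k : ℂ))⁻¹ := by
      funext k
      rw [← mul_inv, ← Complex.ofReal_mul, hσsq k]
    rw [this]
  have hDD : diagonal (fun k => ((σ0 k : ℂ))⁻¹) * diagonal (fun k => (σ0 k : ℂ)) = 1 := by
    rw [Matrix.diagonal_mul_diagonal]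
    have : (fun k => ((σ0 k : ℂ))⁻¹ * (σ0 k : ℂ)) = fun _ => (1 : ℂ) := by
      funext k
      exact inv_mul_cancel₀ (hσ0ne k)
    rw [this, Matrix.diagonal_one]
  have hM : (Uᴴᵀ * diagonal (fun k => ((σ0 k : ℂ))⁻¹) * Uᴴ) * A = 1 := by
    rw [hA4]
    calc Uᴴᵀ * diagonal (fun k => ((σ0 k : ℂ))⁻¹) * Uᴴ *
          (U * diagonal (fun k => (σ0 k : ℂ)) * Uᵀ)
        = Uᴴᵀ * (diagonal (fun k => ((σ0 k : ℂ))⁻¹) *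
            ((Uᴴ * U) * (diagonal (fun k => (σ0 k : ℂ)) * Uᵀ))) := by
          simp only [mul_assoc]
      _ = Uᴴᵀ * (diagonal (fun k => ((σ0 k : ℂ))⁻¹) *
            (diagonal (fun k => (σ0 k : ℂ)) * Uᵀ)) := by
          rw [hUU, one_mul]
      _ = Uᴴᵀ * Uᵀ := by
          simp only [← mul_assoc]
          rw [mul_assoc Uᴴᵀ, hDD, mul_one]
      _ = 1 := hUtc
  have hMG : (Uᴴᵀ * diagonal (fun k => ((σ0 k : ℂ))⁻¹) * Uᴴ) * G * Gᵀ = 1 := by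
    rw [mul_assoc, ← hAdef]
    exact hM
  have h2 : Gᵀ * ((Uᴴᵀ * diagonal (fun k => ((σ0 k : ℂ))⁻¹) * Uᴴ) * G) = 1 :=
    mul_eq_one_comm.mp hMG
  refine ⟨U, s * Uᴴ * G, σ, hUU, ?_, hσpos, ?_⟩
  · have hOT : (s * Uᴴ * G)ᵀ = Gᵀ * (Uᴴᵀ * s) := by
      rw [Matrix.transpose_mul, Matrix.transpose_mul, hsT]
    rw [hOT]
    calc Gᵀ * (Uᴴᵀ * s) * (s * Uᴴ * G)
        = Gᵀ * (Uᴴᵀ * ((s * s) * (Uᴴ * G))) := by simp only [mul_assoc]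
      _ = Gᵀ * (Uᴴᵀ * (diagonal (fun k => ((σ0 k : ℂ))⁻¹) * (Uᴴ * G))) := by rw [hss]
      _ = Gᵀ * ((Uᴴᵀ * diagonal (fun k => ((σ0 k : ℂ))⁻¹) * Uᴴ) * G) := by
          simp only [mul_assoc]
      _ = 1 := h2
  · have hSs : diagonal (fun i => (σ i : ℂ)) * s = 1 := by
      rw [hsdef, Matrix.diagonal_mul_diagonal]
      have : (fun i => (σ i : ℂ) * ((σ i : ℂ))⁻¹) = fun _ => (1 : ℂ) := by
        funext k
        exact mul_inv_cancel₀ (hσne k)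
      rw [this, Matrix.diagonal_one]
    have final : U * diagonal (fun i => (σ i : ℂ)) * (s * Uᴴ * G) = G := by
      calc U * diagonal (fun i => (σ i : ℂ)) * (s * Uᴴ * G)
          = U * ((diagonal (fun i => (σ i : ℂ)) * s) * (Uᴴ * G)) := by
            simp only [mul_assoc]
        _ = U * (Uᴴ * G) := by rw [hSs, one_mul]
        _ = G := by rw [← mul_assoc, hUUc, one_mul]
    exact final.symm
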